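/- For every integer n ≥ 1, the group GL_3(ℤ/2^nℤ) of invertible 3×3 matrices over ℤ/2^nℤ contains a nonabelian subgroup of order 21, and any two nonabelian subgroups of GL_3(ℤ/2^nℤ) of order 21 are conjugate in GL_3(ℤ/2^nℤ). -/

import Mathlib

set_option linter.unusedSectionVars false
open Matrix Subgroup Pointwise

namespace Stmt11


/-- Reduction homomorphism on `GL₃` induced by `ZMod (2^a) → ZMod (2^b)`. -/
noncomputable def redHom {a b : ℕ} (h : b ≤ a) :
    GL (Fin 3) (ZMod (2^a)) →* GL (Fin 3) (ZMod (2^b)) :=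
  Units.map (RingHom.mapMatrix (ZMod.castHom (pow_dvd_pow 2 h) (ZMod (2^b)))).toMonoidHom

lemma dvd_of_cast_eq_zero {a b : ℕ} (hba : b ≤ a) {x : ZMod (2^a)}
    (hx : ZMod.castHom (pow_dvd_pow 2 hba) (ZMod (2^b)) x = 0) :
    ((2^b : ℕ) : ZMod (2^a)) ∣ x := by
  haveI : NeZero (2^a) := ⟨pow_ne_zero _ two_ne_zero⟩
  haveI : NeZero (2^b) := ⟨pow_ne_zero _ two_ne_zero⟩
  have hx' : ((x.val : ℕ) : ZMod (2^b)) = 0 := by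
    rwa [ZMod.natCast_val, ← ZMod.castHom_apply (h := pow_dvd_pow 2 hba)]
  obtain ⟨c, hc⟩ := (ZMod.natCast_eq_zero_iff _ _).mp hx'
  refine ⟨(c : ZMod (2^a)), ?_⟩
  conv_lhs => rw [← ZMod.natCast_zmod_val x]
  rw [hc, Nat.cast_mul]

lemma isUnit_of_cast_isUnit {a b : ℕ} (hb : 1 ≤ b) (hba : b ≤ a) {x : ZMod (2^a)}
    (hx : IsUnit (ZMod.castHom (pow_dvd_pow 2 hba) (ZMod (2^b)) x)) : IsUnit x := by
  haveI : NeZero (2^a) := ⟨pow_ne_zero _ two_ne_zero⟩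
  haveI : NeZero (2^b) := ⟨pow_ne_zero _ two_ne_zero⟩
  have hx' : IsUnit ((x.val : ℕ) : ZMod (2^b)) := by
    rwa [ZMod.natCast_val, ← ZMod.castHom_apply (h := pow_dvd_pow 2 hba)]
  have hco : Nat.Coprime x.val (2^b) := (ZMod.isUnit_iff_coprime _ _).mp hx'
  have hco2 : Nat.Coprime x.val 2 := hco.coprime_dvd_right (dvd_pow_self 2 (by omega))
  have hcoa : Nat.Coprime x.val (2^a) := hco2.pow_right a
  have : IsUnit ((x.val : ℕ) : ZMod (2^a)) := (ZMod.isUnit_iff_coprime _ _).mpr hcoa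
  rwa [ZMod.natCast_zmod_val] at this

lemma redHom_surjective {a b : ℕ} (hb : 1 ≤ b) (hba : b ≤ a) :
    Function.Surjective (redHom hba) := by
  haveI : NeZero (2^a) := ⟨pow_ne_zero _ two_ne_zero⟩
  haveI : NeZero (2^b) := ⟨pow_ne_zero _ two_ne_zero⟩
  intro u
  set f := ZMod.castHom (pow_dvd_pow 2 hba) (ZMod (2^b)) with hf
  set M : Matrix (Fin 3) (Fin 3) (ZMod (2^a)) := fun i j => ((u.val i j).val : ZMod (2^a)) with hM
  have hMc : M.map f = u.val := by
    ext i j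
    show f (M i j) = u.val i j
    simp only [Matrix.map_apply, hM, map_natCast, ZMod.natCast_zmod_val]
  have hdet : IsUnit (M.det) := by
    apply isUnit_of_cast_isUnit hb hba
    show IsUnit (f M.det)
    rw [RingHom.map_det, RingHom.mapMatrix_apply, hMc]
    exact (Matrix.isUnit_iff_isUnit_det _).mp u.isUnit
  have hMu : IsUnit M := (Matrix.isUnit_iff_isUnit_det _).mpr hdet
  refine ⟨hMu.unit, ?_⟩
  ext : 1
  show (RingHom.mapMatrix f) hMu.unit.val = u.val
  rw [IsUnit.unit_spec, RingHom.mapMatrix_apply, hMc]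


lemma entry_dvd_of_ker {a b : ℕ} (hba : b ≤ a) {u : GL (Fin 3) (ZMod (2^a))}
    (hu : u ∈ (redHom hba).ker) (i j : Fin 3) :
    ((2^b : ℕ) : ZMod (2^a)) ∣ (u.val - 1) i j := by
  set f := ZMod.castHom (pow_dvd_pow 2 hba) (ZMod (2^b)) with hf
  have h1 : (RingHom.mapMatrix f) u.val = 1 := by
    have := hu
    rw [MonoidHom.mem_ker] at this
    exact congrArg Units.val this
  apply dvd_of_cast_eq_zero hba
  rw [← hf]
  have he : f (u.val i j) = (1 : Matrix (Fin 3) (Fin 3) (ZMod (2^b))) i j := by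
    have := congrFun (congrFun (congrArg (fun m => (m : Matrix (Fin 3) (Fin 3) (ZMod (2^b)))) h1) i) j
    simpa [RingHom.mapMatrix_apply, Matrix.map_apply] using this
  have h1e : f ((1 : Matrix (Fin 3) (Fin 3) (ZMod (2^a))) i j)
      = (1 : Matrix (Fin 3) (Fin 3) (ZMod (2^b))) i j := by
    by_cases hij : i = j <;> simp [Matrix.one_apply, hij]
  rw [Matrix.sub_apply, map_sub, he, h1e, sub_self]

lemma entry_dvd_mul {a : ℕ} {c d : ZMod (2^a)} {X Y : Matrix (Fin 3) (Fin 3) (ZMod (2^a))}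
    (hX : ∀ i j, c ∣ X i j) (hY : ∀ i j, d ∣ Y i j) (i j : Fin 3) :
    c * d ∣ (X * Y) i j := by
  rw [Matrix.mul_apply]
  exact Finset.dvd_sum fun l _ => mul_dvd_mul (hX i l) (hY l j)

lemma ker_pow_eq_one {a b : ℕ} (hb : 1 ≤ b) (hba : b ≤ a) {u : GL (Fin 3) (ZMod (2^a))}
    (hu : u ∈ (redHom hba).ker) : u ^ (2^(a-b)) = 1 := by
  haveI : NeZero (2^a) := ⟨pow_ne_zero _ two_ne_zero⟩
  have key : ∀ m : ℕ, ∀ i j, ((2^(b+m) : ℕ) : ZMod (2^a)) ∣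
      (((u.val)^(2^m) - 1 : Matrix (Fin 3) (Fin 3) (ZMod (2^a))) i j) := by
    intro m
    induction m with
    | zero => simpa using entry_dvd_of_ker hba hu
    | succ m ih =>
      intro i j
      set B := (u.val)^(2^m) with hB
      have hpow : (u.val)^(2^(m+1)) = B * B := by
        rw [hB, ← pow_add]
        congr 1
        omega
      have hexp : B * B - 1 = (B - 1) * (B - 1) + ((B - 1) + (B - 1)) := by noncomm_ring
      rw [hpow, hexp]
      have hmul : ((2^(b+m) : ℕ) : ZMod (2^a)) * ((2^(b+m) : ℕ) : ZMod (2^a))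
          ∣ ((B - 1) * (B - 1)) i j := entry_dvd_mul ih ih i j
      have hdvd1 : ((2^(b+(m+1)) : ℕ) : ZMod (2^a)) ∣ ((B - 1) * (B - 1)) i j := by
        refine dvd_trans ?_ hmul
        rw [← Nat.cast_mul, ← pow_add]
        exact Nat.cast_dvd_cast (pow_dvd_pow 2 (by omega))
      have hdvd2 : ((2^(b+(m+1)) : ℕ) : ZMod (2^a)) ∣ ((B - 1) + (B - 1)) i j := by
        rw [Matrix.add_apply, ← two_mul]
        have : ((2^(b+(m+1)) : ℕ) : ZMod (2^a)) = 2 * ((2^(b+m) : ℕ) : ZMod (2^a)) := by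
          push_cast
          ring
        rw [this]
        exact mul_dvd_mul_left 2 (ih i j)
      rw [Matrix.add_apply]
      exact dvd_add hdvd1 hdvd2
  have hzero : ∀ i j, (((u.val)^(2^(a-b)) - 1 : Matrix (Fin 3) (Fin 3) (ZMod (2^a))) i j) = 0 := by
    intro i j
    have := key (a-b) i j
    rw [Nat.add_sub_cancel' hba] at this
    rw [ZMod.natCast_self] at this
    exact zero_dvd_iff.mp this
  have hm : (u.val)^(2^(a-b)) = 1 := by
    have h0 : (u.val)^(2^(a-b)) - 1 = 0 := by
      ext i j
      simpa using hzero i j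
    exact eq_of_sub_eq_zero h0
  apply Units.ext
  rw [Units.val_pow_eq_pow_val]
  exact hm


lemma ker_isPGroup {a b : ℕ} (hb : 1 ≤ b) (hba : b ≤ a) :
    IsPGroup 2 (redHom (a := a) hba).ker := by
  intro g
  refine ⟨a - b, ?_⟩
  apply Subtype.ext
  apply Units.ext
  push_cast
  rw [← Units.val_pow_eq_pow_val, ker_pow_eq_one hb hba g.2, Units.val_one]

lemma ker_comm {a b : ℕ} (hba : b ≤ a) (hab : a ≤ 2*b)
    (x y : (redHom (a := a) hba).ker) : x * y = y * x := by
  haveI : NeZero (2^a) := ⟨pow_ne_zero _ two_ne_zero⟩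
  set X := (x : GL (Fin 3) (ZMod (2^a))).val - 1 with hX
  set Y := (y : GL (Fin 3) (ZMod (2^a))).val - 1 with hY
  have hXd := entry_dvd_of_ker hba x.2
  have hYd := entry_dvd_of_ker hba y.2
  have hcast : ((2^b : ℕ) : ZMod (2^a)) * ((2^b : ℕ) : ZMod (2^a)) = 0 := by
    rw [← Nat.cast_mul, ← pow_add, ZMod.natCast_eq_zero_iff]
    exact pow_dvd_pow 2 (by omega)
  have hXY : X * Y = 0 := by
    ext i j
    have := entry_dvd_mul hXd hYd i j
    rw [hcast] at this
    simpa using zero_dvd_iff.mp this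
  have hYX : Y * X = 0 := by
    ext i j
    have := entry_dvd_mul hYd hXd i j
    rw [hcast] at this
    simpa using zero_dvd_iff.mp this
  have hval : (x : GL (Fin 3) (ZMod (2^a))).val * (y : GL (Fin 3) (ZMod (2^a))).val
      = (y : GL (Fin 3) (ZMod (2^a))).val * (x : GL (Fin 3) (ZMod (2^a))).val := by
    have hx1 : (x : GL (Fin 3) (ZMod (2^a))).val = X + 1 := eq_add_of_sub_eq hX.symm
    have hy1 : (y : GL (Fin 3) (ZMod (2^a))).val = Y + 1 := eq_add_of_sub_eq hY.symm
    rw [hx1, hy1]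
    have e1 : (X + 1) * (Y + 1) - (Y + 1) * (X + 1) = X * Y - Y * X := by noncomm_ring
    rw [hXY, hYX, sub_self] at e1
    have := sub_eq_zero.mp e1
    exact this
  apply Subtype.ext
  apply Units.ext
  push_cast
  exact hval



open scoped IsMulCommutative in
/-- Conjugacy of complements to an abelian normal Hall subgroup. -/
lemma conj_of_complements {G : Type*} [Group G] [Finite G] {N H1 H2 : Subgroup G}
    [N.Normal] [IsMulCommutative N]
    (h1 : N.IsComplement' H1) (h2 : N.IsComplement' H2)
    (hco : Nat.Coprime (Nat.card N) (Nat.card H1)) :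
    ∃ g : G, H2 = H1.map (MulAut.conj g).toMonoidHom := by
  classical
  haveI : Fintype H1 := Fintype.ofFinite _
  -- decomposition along N * H2
  set q := h2.equiv with hq
  have hdec : ∀ g : G, ((q g).1 : G) * ((q g).2 : G) = g := fun g =>
    h2.equiv_fst_mul_equiv_snd g
  have huniq : ∀ (g : G) (ν ν' : N) (η η' : H2),
      (ν : G) * η = g → (ν' : G) * η' = g → ν = ν' ∧ η = η' := by
    intro g ν ν' η η' h h'
    have := h2.injective (a₁ := (⟨⟨ν, ν.2⟩, ⟨η, η.2⟩⟩ : ↥(N : Set G) × ↥(H2 : Set G)))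
      (a₂ := (⟨⟨ν', ν'.2⟩, ⟨η', η'.2⟩⟩ : ↥(N : Set G) × ↥(H2 : Set G)))
      (by simpa using h.trans h'.symm)
    refine ⟨?_, ?_⟩
    · have := congrArg Prod.fst this
      exact Subtype.ext (congrArg Subtype.val this)
    · have := congrArg Prod.snd this
      exact Subtype.ext (congrArg Subtype.val this)
  -- the 1-cochain
  set c : H1 → N := fun x => ⟨((q (x : G)).1 : G), (q (x : G)).1.2⟩ with hc
  set t : H1 → H2 := fun x => ⟨((q (x : G)).2 : G), (q (x : G)).2.2⟩ with ht
  have hxdec : ∀ x : H1, ((c x : G)) * ((t x : G)) = (x : G) := fun x => hdec (x : G)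
  -- cocycle identity
  have hcoc : ∀ x z : H1, c (x * z) = MulAut.conjNormal (x : G) (c z) * c x := by
    intro x z
    have hd1 : ((c (x * z) : G)) * ((t (x * z) : G)) = ((x * z : H1) : G) := hxdec (x * z)
    have hd2 : ((MulAut.conjNormal (x : G) (c z) * c x : N) : G) * ((t x * t z : H2) : G)
        = ((x * z : H1) : G) := by
      push_cast
      rw [MulAut.conjNormal_apply]
      have hx := hxdec x
      have hz := hxdec z
      calc (x : G) * (c z : G) * (x : G)⁻¹ * (c x : G) * ((t x : G) * (t z : G))
          = (x : G) * (c z : G) * (x : G)⁻¹ * ((c x : G) * (t x : G)) * (t z : G) := by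
            group
        _ = (x : G) * (c z : G) * (x : G)⁻¹ * (x : G) * (t z : G) := by rw [hx]
        _ = (x : G) * ((c z : G) * (t z : G)) := by group
        _ = (x : G) * (z : G) := by rw [hz]
    exact (huniq _ _ _ _ _ hd1 hd2).1
  -- conjugation by x ∈ H1 as an automorphism of N
  set k : ℕ := Nat.card H1 with hk
  set e : N := ∏ z : H1, c z with he
  have key : ∀ x : H1, MulAut.conjNormal (x : G) e = e * (c x)⁻¹ ^ k := by
    intro x
    have h1' : ∏ z : H1, c (x * z) = e :=
      Fintype.prod_equiv (Equiv.mulLeft x) (fun z => c (x * z)) c (fun z => rfl)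
    have h2' : ∏ z : H1, c (x * z) = MulAut.conjNormal (x : G) e * (c x) ^ k := by
      calc ∏ z : H1, c (x * z)
          = ∏ z : H1, ((MulAut.conjNormal (x : G)) (c z) * c x) :=
            Finset.prod_congr rfl (fun z _ => hcoc x z)
        _ = (∏ z : H1, (MulAut.conjNormal (x : G)) (c z)) * ∏ _z : H1, c x :=
            Finset.prod_mul_distrib
        _ = MulAut.conjNormal (x : G) e * (c x) ^ k := by
            rw [← map_prod, ← he, Finset.prod_const, Finset.card_univ, hk,
              Nat.card_eq_fintype_card]
    rw [h1'] at h2'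
    rw [inv_pow, eq_mul_inv_iff_mul_eq]
    exact h2'.symm
  -- the conjugating element
  have hcopow : (Nat.card N).Coprime k := hco
  set m : N := (powCoprime hcopow).symm e with hm
  have hmk : m ^ k = e := by
    have := (powCoprime hcopow).apply_symm_apply e
    rwa [powCoprime_apply] at this
  have hconj : ∀ x : H1, MulAut.conjNormal (x : G) m = m * (c x)⁻¹ := by
    intro x
    apply (powCoprime hcopow).injective
    rw [powCoprime_apply, powCoprime_apply]
    rw [← map_pow, hmk, key x, mul_pow, hmk]
  have hmem : ∀ x : H1, (m : G)⁻¹ * (x : G) * (m : G) ∈ H2 := by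
    intro x
    have h := congrArg (Subtype.val : N → G) (hconj x)
    rw [MulAut.conjNormal_apply] at h
    push_cast at h
    -- h : x * m * x⁻¹ = m * (c x)⁻¹
    have : (m : G)⁻¹ * (x : G) * (m : G) = (c x : G)⁻¹ * (x : G) := by
      have hxm : (x : G) * (m : G) = (m : G) * (c x : G)⁻¹ * (x : G) := by
        calc (x : G) * (m : G) = ((x : G) * (m : G) * (x : G)⁻¹) * (x : G) := by group
          _ = (m : G) * (c x : G)⁻¹ * (x : G) := by rw [h]
      rw [mul_assoc, hxm]
      group
    rw [this]
    have := hxdec x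
    have htx : (c x : G)⁻¹ * (x : G) = (t x : G) := by
      rw [← this]; group
    rw [htx]
    exact (t x).2
  -- conclude
  refine ⟨(m : G)⁻¹, ?_⟩
  have hle : H1.map (MulAut.conj ((m : G)⁻¹)).toMonoidHom ≤ H2 := by
    rintro y ⟨x, hx, rfl⟩
    have := hmem ⟨x, hx⟩
    simpa [MulAut.conj_apply, mul_assoc] using this
  have hcards : Nat.card H2 = Nat.card (H1.map (MulAut.conj ((m : G)⁻¹)).toMonoidHom) := by
    have e1 : Nat.card (H1.map (MulAut.conj ((m : G)⁻¹)).toMonoidHom) = Nat.card H1 :=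
      (Nat.card_congr (Subgroup.equivMapOfInjective H1 _
        (MulAut.conj ((m : G)⁻¹)).injective).toEquiv).symm
    have e2 : Nat.card N * Nat.card H1 = Nat.card N * Nat.card H2 := by
      rw [h1.card_mul, h2.card_mul]
    have e3 : Nat.card H1 = Nat.card H2 :=
      Nat.eq_of_mul_eq_mul_left Nat.card_pos e2
    rw [e1, ← e3]
  exact (Subgroup.eq_of_le_of_card_ge hle (le_of_eq hcards)).symm



section Lift
variable {G G' : Type*} [Group G] [Group G'] [Finite G] [Finite G']

lemma inf_eq_bot_of_coprime' {H K : Subgroup G} (h : Nat.Coprime (Nat.card H) (Nat.card K)) :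
    H ⊓ K = ⊥ := Subgroup.inf_eq_bot_of_coprime h

lemma card_map_of_disjoint (φ : G →* G') {H : Subgroup G} (hd : φ.ker ⊓ H = ⊥) :
    Nat.card (H.map φ) = Nat.card H := by
  have hker : (φ.domRestrict H).ker = ⊥ := by
    rw [MonoidHom.ker_restrict]
    rw [eq_bot_iff]
    rintro ⟨x, hxH⟩ hx
    have : x ∈ φ.ker ⊓ H := ⟨hx, hxH⟩
    rw [hd] at this
    simpa [Subgroup.mem_bot, Subtype.ext_iff] using this
  have hinj : Function.Injective (φ.domRestrict H) := (MonoidHom.ker_eq_bot_iff _).mp hker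
  calc Nat.card (H.map φ) = Nat.card (φ.domRestrict H).range := by rw [MonoidHom.restrict_range]
    _ = Nat.card H := (Nat.card_congr (MonoidHom.ofInjective hinj).toEquiv).symm

lemma ker_comp_subtype (φ : G →* G') (M : Subgroup G) :
    (φ.comp M.subtype).ker = φ.ker.subgroupOf M := rfl

/-- Lifting a subgroup of order 21 through a surjection with 2-group kernel. -/
lemma exist_lift (φ : G →* G') (hs : Function.Surjective φ) (hker : IsPGroup 2 φ.ker)
    (H' : Subgroup G') (h21 : Nat.card H' = 21) :
    ∃ H : Subgroup G, Nat.card H = 21 ∧ H.map φ = H' := by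
  classical
  set M : Subgroup G := H'.comap φ with hM
  set ψ : M →* G' := φ.comp M.subtype with hψ
  have hrange : ψ.range = H' := by
    rw [hψ, MonoidHom.range_comp, Subgroup.range_subtype, hM,
      Subgroup.map_comap_eq_self_of_surjective hs]
  have hkerψ : ψ.ker = φ.ker.subgroupOf M := rfl
  have hp : IsPGroup 2 ψ.ker := by
    intro g
    obtain ⟨k, hk⟩ := hker ⟨(g : M), g.2⟩
    refine ⟨k, ?_⟩
    have : ((g : M) : G) ^ 2 ^ k = 1 := by
      have := congrArg (Subtype.val) hk
      push_cast at this
      exact this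
    apply Subtype.ext
    apply Subtype.ext
    push_cast
    exact this
  have hindex : ψ.ker.index = 21 := by
    rw [Subgroup.index_eq_card]
    rw [Nat.card_congr (QuotientGroup.quotientKerEquivRange ψ).toEquiv, hrange, h21]
  obtain ⟨k, hk⟩ := hp.exists_card_eq
  have hco : Nat.Coprime (Nat.card ψ.ker) ψ.ker.index := by
    rw [hk, hindex]
    exact Nat.Coprime.pow_left _ (by norm_num)
  obtain ⟨Hm, hHm⟩ := Subgroup.exists_right_complement'_of_coprime hco
  have hcardHm : Nat.card Hm = 21 := by
    have := hHm.symm.index_eq_card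
    rw [← this, hindex]
  refine ⟨Hm.map M.subtype, ?_, ?_⟩
  · rw [card_map_of_disjoint _ (by simp [Subgroup.ker_subtype])]
    exact hcardHm
  · rw [Subgroup.map_map]
    have hle : Hm.map ψ ≤ H' := by
      rw [← hrange]
      exact Subgroup.map_le_range ψ Hm
    have hcard : Nat.card (Hm.map ψ) = 21 := by
      rw [card_map_of_disjoint ψ (disjoint_iff.mp hHm.disjoint), hcardHm]
    have : Hm.map ψ = H' := Subgroup.eq_of_le_of_card_ge hle (by rw [hcard, h21])
    rw [← hψ, this]

lemma conj_comp (x y : G) :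
    (MulAut.conj x).toMonoidHom.comp (MulAut.conj y).toMonoidHom
      = (MulAut.conj (x * y)).toMonoidHom := by
  ext g
  simp [mul_assoc]

lemma map_conj_map_conj (H : Subgroup G) (x y : G) :
    (H.map (MulAut.conj y).toMonoidHom).map (MulAut.conj x).toMonoidHom
      = H.map (MulAut.conj (x * y)).toMonoidHom := by
  rw [Subgroup.map_map, conj_comp]

lemma conj_one_map (H : Subgroup G) : H.map (MulAut.conj (1 : G)).toMonoidHom = H := by
  have : (MulAut.conj (1 : G)).toMonoidHom = MonoidHom.id G := by
    ext g; simp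
  rw [this]
  exact Subgroup.map_id H



/-- Transfer of the conjugacy statement through a surjection with abelian 2-group kernel. -/
lemma conj_lift (φ : G →* G') (hs : Function.Surjective φ) (hker : IsPGroup 2 φ.ker)
    (hab : ∀ x y : φ.ker, x * y = y * x)
    (IH : ∀ H' K' : Subgroup G', Nat.card H' = 21 → ¬ (∀ x y : H', x * y = y * x) →
      Nat.card K' = 21 → ¬ (∀ x y : K', x * y = y * x) →
      ∃ g' : G', K' = H'.map (MulAut.conj g').toMonoidHom) :
    ∀ H K : Subgroup G, Nat.card H = 21 → ¬ (∀ x y : H, x * y = y * x) →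
      Nat.card K = 21 → ¬ (∀ x y : K, x * y = y * x) →
      ∃ g : G, K = H.map (MulAut.conj g).toMonoidHom := by
  classical
  obtain ⟨k2, hk2⟩ := hker.exists_card_eq
  -- ker φ has trivial intersection with any 21-subgroup
  have hdisj : ∀ (L : Subgroup G), Nat.card L = 21 → φ.ker ⊓ L = ⊥ := by
    intro L hL
    apply inf_eq_bot_of_coprime'
    rw [hk2, hL]
    exact Nat.Coprime.pow_left _ (by norm_num)
  have hinj : ∀ (L : Subgroup G), Nat.card L = 21 → Function.Injective (φ.domRestrict L) := by
    intro L hL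
    rw [← MonoidHom.ker_eq_bot_iff, MonoidHom.ker_restrict]
    rw [eq_bot_iff]
    rintro ⟨x, hxL⟩ hx
    have : x ∈ φ.ker ⊓ L := ⟨hx, hxL⟩
    rw [hdisj L hL] at this
    simpa [Subgroup.mem_bot, Subtype.ext_iff] using this
  have hcardmap : ∀ (L : Subgroup G), Nat.card L = 21 → Nat.card (L.map φ) = 21 := by
    intro L hL
    rw [card_map_of_disjoint φ (hdisj L hL)]
    exact hL
  have hnamap : ∀ (L : Subgroup G), Nat.card L = 21 → ¬ (∀ x y : L, x * y = y * x) →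
      ¬ (∀ x y : (L.map φ), x * y = y * x) := by
    intro L hL hna hcomm
    apply hna
    intro x y
    apply hinj L hL
    have hx' : φ x ∈ L.map φ := ⟨x, x.2, rfl⟩
    have hy' : φ y ∈ L.map φ := ⟨y, y.2, rfl⟩
    have := hcomm ⟨φ x, hx'⟩ ⟨φ y, hy'⟩
    have hGlevel : φ (x : G) * φ (y : G) = φ (y : G) * φ (x : G) := by
      simpa [Subtype.ext_iff] using this
    show φ ((x * y : L) : G) = φ ((y * x : L) : G)
    push_cast
    rw [_root_.map_mul, _root_.map_mul, hGlevel]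
  intro H K h21H hnaH h21K hnaK
  obtain ⟨g', hg'⟩ := IH (H.map φ) (K.map φ) (hcardmap H h21H) (hnamap H h21H hnaH)
    (hcardmap K h21K) (hnamap K h21K hnaK)
  obtain ⟨g0, hg0⟩ := hs g'
  set H₂ : Subgroup G := H.map (MulAut.conj g0).toMonoidHom with hH₂
  have hmapH₂ : H₂.map φ = K.map φ := by
    rw [hH₂, Subgroup.map_map]
    have hcomp : φ.comp (MulAut.conj g0).toMonoidHom
        = (MulAut.conj g').toMonoidHom.comp φ := by
      ext x
      simp [← hg0]
    rw [hcomp, ← Subgroup.map_map, ← hg']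
  have h21H₂ : Nat.card H₂ = 21 := by
    rw [hH₂]
    rw [Nat.card_congr (Subgroup.equivMapOfInjective H _
      (MulAut.conj g0).injective).toEquiv.symm]
    exact h21H
  -- work inside M
  set M : Subgroup G := (K.map φ).comap φ with hM
  have hKM : K ≤ M := Subgroup.le_comap_map φ K
  have hH₂M : H₂ ≤ M := by
    rw [hM, ← hmapH₂]
    exact Subgroup.le_comap_map φ H₂
  set ψ : M →* G' := φ.comp M.subtype with hψ
  have hrange : ψ.range = K.map φ := by
    rw [hψ, MonoidHom.range_comp, Subgroup.range_subtype, hM,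
      Subgroup.map_comap_eq_self_of_surjective hs]
  have hkerψ : ψ.ker = φ.ker.subgroupOf M := rfl
  have hindex : ψ.ker.index = 21 := by
    rw [Subgroup.index_eq_card]
    rw [Nat.card_congr (QuotientGroup.quotientKerEquivRange ψ).toEquiv, hrange,
      hcardmap K h21K]
  have hpψ : IsPGroup 2 ψ.ker := by
    intro g
    obtain ⟨k, hk⟩ := hker ⟨(g : M), g.2⟩
    refine ⟨k, ?_⟩
    have : ((g : M) : G) ^ 2 ^ k = 1 := by
      have := congrArg (Subtype.val) hk
      push_cast at this
      exact this
    apply Subtype.ext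
    apply Subtype.ext
    push_cast
    exact this
  obtain ⟨kk, hkk⟩ := hpψ.exists_card_eq
  have hcoψ : Nat.Coprime (Nat.card ψ.ker) 21 := by
    rw [hkk]
    exact Nat.Coprime.pow_left _ (by norm_num)
  haveI : IsMulCommutative ψ.ker := by
    constructor
    constructor
    rintro ⟨⟨x, hxM⟩, hx⟩ ⟨⟨y, hyM⟩, hy⟩
    have := hab ⟨x, hx⟩ ⟨y, hy⟩
    have hxy : x * y = y * x := by simpa [Subtype.ext_iff] using this
    apply Subtype.ext
    apply Subtype.ext
    push_cast
    exact hxy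
  -- the two complements
  have hcardM : Nat.card M = Nat.card ψ.ker * 21 := by
    rw [← hindex]
    exact (Subgroup.card_mul_index ψ.ker).symm
  have hcardK' : Nat.card (K.subgroupOf M) = 21 := by
    rw [Nat.card_congr (Subgroup.subgroupOfEquivOfLe hKM).toEquiv]
    exact h21K
  have hcardH₂' : Nat.card (H₂.subgroupOf M) = 21 := by
    rw [Nat.card_congr (Subgroup.subgroupOfEquivOfLe hH₂M).toEquiv]
    exact h21H₂
  have hcompK : ψ.ker.IsComplement' (K.subgroupOf M) := by
    apply Subgroup.isComplement'_of_coprime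
    · rw [hcardK', ← hcardM]
    · rw [hcardK']
      exact hcoψ
  have hcompH₂ : ψ.ker.IsComplement' (H₂.subgroupOf M) := by
    apply Subgroup.isComplement'_of_coprime
    · rw [hcardH₂', ← hcardM]
    · rw [hcardH₂']
      exact hcoψ
  obtain ⟨m, hm⟩ := conj_of_complements hcompK hcompH₂ (by rw [hcardK']; exact hcoψ)
  -- push back to G
  have hpush : H₂ = K.map (MulAut.conj ((m : G))).toMonoidHom := by
    have e1 : (H₂.subgroupOf M).map M.subtype = H₂ := by
      rw [Subgroup.subgroupOf_map_subtype, inf_of_le_left hH₂M]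
    have e2 : (K.subgroupOf M).map M.subtype = K := by
      rw [Subgroup.subgroupOf_map_subtype, inf_of_le_left hKM]
    have e3 : ((K.subgroupOf M).map (MulAut.conj m).toMonoidHom).map M.subtype
        = ((K.subgroupOf M).map M.subtype).map (MulAut.conj ((m : G))).toMonoidHom := by
      rw [Subgroup.map_map, Subgroup.map_map]
      have : M.subtype.comp (MulAut.conj m).toMonoidHom
          = (MulAut.conj ((m : G))).toMonoidHom.comp M.subtype := by
        ext x
        simp
      rw [this]
    rw [← e1, hm, e3, e2]
  obtain ⟨minv, hminv⟩ : ∃ w : G, w * (m : G) = 1 := ⟨(m : G)⁻¹, inv_mul_cancel _⟩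
  refine ⟨(m : G)⁻¹ * g0, ?_⟩
  rw [← map_conj_map_conj, ← hH₂, hpush, map_conj_map_conj, inv_mul_cancel, conj_one_map]

end Lift



section Base168
variable {G : Type*} [Group G] [Finite G]

lemma fact168 (h168 : Nat.card G = 168) : (Nat.card G).factorization 7 = 1 := by
  have hne : Nat.card G ≠ 0 := by rw [h168]; norm_num
  have h1 : (7:ℕ)^1 ∣ Nat.card G := by rw [h168]; norm_num
  have h2 : ¬ (7:ℕ)^2 ∣ Nat.card G := by rw [h168]; decide
  have hlb := (Nat.Prime.pow_dvd_iff_le_factorization (by norm_num) hne).mp h1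
  have hub : (Nat.card G).factorization 7 ≤ 1 := by
    by_contra hcon
    push_neg at hcon
    exact h2 ((Nat.Prime.pow_dvd_iff_le_factorization (by norm_num) hne).mpr hcon)
  omega

lemma norm21 (h168 : Nat.card G = 168) (a b : G) (ha : orderOf a = 7) (hb : orderOf b = 7)
    (hab : Subgroup.zpowers a ≠ Subgroup.zpowers b) (P : Sylow 7 G) :
    Nat.card (Subgroup.normalizer ((P : Subgroup G) : Set G)) = 21 := by
  haveI : Fact (Nat.Prime 7) := ⟨by norm_num⟩
  have hfact := fact168 h168
  have hcardP : Nat.card (P : Subgroup G) = 7 := by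
    rw [P.card_eq_multiplicity, hfact, pow_one]
  have hindexP : (P : Subgroup G).index = 24 := by
    have := Subgroup.card_mul_index (P : Subgroup G)
    rw [hcardP, h168] at this
    omega
  set nS := Nat.card (Sylow 7 G) with hnS
  have hdvd : nS ∣ 24 := by
    have := P.card_dvd_index
    rwa [hindexP] at this
  have hmod : nS % 7 = 1 % 7 := card_sylow_modEq_one 7 G
  have h18 : nS = 1 ∨ nS = 8 := by
    have hd : ∀ d ∈ Nat.divisors 24, d % 7 = 1 % 7 → d = 1 ∨ d = 8 := by decide
    exact hd nS (Nat.mem_divisors.mpr ⟨hdvd, by norm_num⟩) hmod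
  have hne1 : nS ≠ 1 := by
    intro h1
    haveI hsub : Subsingleton (Sylow 7 G) := by
      have := Nat.card_eq_one_iff_unique.mp h1
      exact this.1
    have hca : Nat.card (Subgroup.zpowers a) = 7 ^ (Nat.card G).factorization 7 := by
      rw [hfact, pow_one, Nat.card_zpowers, ha]
    have hcb : Nat.card (Subgroup.zpowers b) = 7 ^ (Nat.card G).factorization 7 := by
      rw [hfact, pow_one, Nat.card_zpowers, hb]
    have : Sylow.ofCard (Subgroup.zpowers a) hca = Sylow.ofCard (Subgroup.zpowers b) hcb :=
      Subsingleton.elim _ _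
    exact hab (congrArg (fun P : Sylow 7 G => (P : Subgroup G)) this)
  have hnS8 : nS = 8 := by omega
  have hidx : (Subgroup.normalizer ((P : Subgroup G) : Set G)).index = 8 := by
    have h := P.card_eq_index_normalizer
    rw [← hnS, hnS8] at h
    exact h.symm
  have := Subgroup.card_mul_index (Subgroup.normalizer ((P : Subgroup G) : Set G))
  rw [hidx, h168] at this
  omega

lemma subgroup21_eq_normalizer (h168 : Nat.card G = 168) (a b : G) (ha : orderOf a = 7)
    (hb : orderOf b = 7) (hab : Subgroup.zpowers a ≠ Subgroup.zpowers b)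
    (H : Subgroup G) (h21 : Nat.card H = 21) :
    ∃ P : Sylow 7 G, H = Subgroup.normalizer ((P : Subgroup G) : Set G) := by
  haveI : Fact (Nat.Prime 7) := ⟨by norm_num⟩
  have hfact := fact168 h168
  have h7 : (7:ℕ) ∣ Nat.card H := by rw [h21]; norm_num
  obtain ⟨x, hx⟩ := exists_prime_orderOf_dvd_card' (G := H) 7 h7
  have hxG : orderOf (x : G) = 7 := by
    rw [← hx]
    exact orderOf_injective H.subtype Subtype.coe_injective x
  set Q : Subgroup G := Subgroup.zpowers (x : G) with hQ
  have hQH : Q ≤ H := by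
    rw [hQ, Subgroup.zpowers_le]
    exact x.2
  have hQcard : Nat.card Q = 7 := by rw [hQ, Nat.card_zpowers, hxG]
  have hQmult : Nat.card Q = 7 ^ (Nat.card G).factorization 7 := by
    rw [hfact, pow_one, hQcard]
  set P : Sylow 7 G := Sylow.ofCard Q hQmult with hP
  -- the Sylow subgroup of H
  set QH : Subgroup H := Q.subgroupOf H with hQH'
  have hQHcard : Nat.card QH = 7 := by
    rw [hQH', Nat.card_congr (Subgroup.subgroupOfEquivOfLe hQH).toEquiv]
    exact hQcard
  have hfactH : (Nat.card H).factorization 7 = 1 := by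
    rw [h21]
    have h1 : (7:ℕ)^1 ∣ 21 := by norm_num
    have h2 : ¬ (7:ℕ)^2 ∣ 21 := by decide
    have hlb := (Nat.Prime.pow_dvd_iff_le_factorization (n := 21) (by norm_num) (by norm_num)).mp h1
    have hub : (21:ℕ).factorization 7 ≤ 1 := by
      by_contra hcon
      push_neg at hcon
      exact h2 ((Nat.Prime.pow_dvd_iff_le_factorization (by norm_num) (by norm_num)).mpr hcon)
    omega
  have hQHmult : Nat.card QH = 7 ^ (Nat.card H).factorization 7 := by
    rw [hfactH, pow_one, hQHcard]
  set PH : Sylow 7 H := Sylow.ofCard QH hQHmult with hPH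
  have hQHidx : QH.index = 3 := by
    have := Subgroup.card_mul_index QH
    rw [hQHcard, h21] at this
    omega
  have hnH : Nat.card (Sylow 7 H) = 1 := by
    have hdvd : Nat.card (Sylow 7 H) ∣ 3 := by
      have := PH.card_dvd_index
      have hco : (PH : Subgroup H) = QH := rfl
      rwa [hco, hQHidx] at this
    have hmod : Nat.card (Sylow 7 H) % 7 = 1 % 7 := card_sylow_modEq_one 7 H
    have hd : ∀ d ∈ Nat.divisors 3, d % 7 = 1 % 7 → d = 1 := by decide
    exact hd _ (Nat.mem_divisors.mpr ⟨hdvd, by norm_num⟩) hmod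
  haveI hsub : Subsingleton (Sylow 7 H) := (Nat.card_eq_one_iff_unique.mp hnH).1
  have hnormal : QH.Normal := by
    rw [← Subgroup.normalizer_eq_top_iff]
    rw [eq_top_iff]
    intro h _
    have : h • PH = PH := Subsingleton.elim _ _
    exact Sylow.smul_eq_iff_mem_normalizer.mp this
  have hHle : H ≤ Subgroup.normalizer (Q : Set G) := by
    intro h hh
    rw [Subgroup.mem_normalizer_iff]
    intro g
    constructor
    · intro hg
      have hgH : g ∈ H := hQH hg
      have hmem : (⟨g, hgH⟩ : H) ∈ QH := by
        rw [hQH', Subgroup.mem_subgroupOf]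
        exact hg
      have := hnormal.conj_mem _ hmem ⟨h, hh⟩
      rw [Subgroup.mem_subgroupOf] at this
      exact this
    · intro hg
      have hghH : h * g * h⁻¹ ∈ H := hQH hg
      have hgH : g ∈ H := by
        have := H.mul_mem (H.mul_mem (H.inv_mem hh) hghH) hh
        have heq : h⁻¹ * (h * g * h⁻¹) * h = g := by group
        rwa [heq] at this
      have hmem : (⟨h * g * h⁻¹, hghH⟩ : H) ∈ QH := by
        rw [hQH', Subgroup.mem_subgroupOf]
        exact hg
      have := hnormal.conj_mem _ hmem (⟨h, hh⟩ : H)⁻¹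
      rw [Subgroup.mem_subgroupOf] at this
      have hG : h⁻¹ * (h * g * h⁻¹) * h⁻¹⁻¹ ∈ Q := by
        have hcoe : ((⟨h, hh⟩⁻¹ * ⟨h * g * h⁻¹, hghH⟩ * ⟨h, hh⟩⁻¹⁻¹ : H) : G)
            = h⁻¹ * (h * g * h⁻¹) * h⁻¹⁻¹ := by
          push_cast
          rfl
        rwa [hcoe] at this
      have heq : h⁻¹ * (h * g * h⁻¹) * h⁻¹⁻¹ = g := by group
      rwa [heq] at hG
  refine ⟨P, ?_⟩
  have hcoe : (P : Subgroup G) = Q := rfl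
  have hn21 : Nat.card (Subgroup.normalizer ((P : Subgroup G) : Set G)) = 21 := norm21 h168 a b ha hb hab P
  apply Subgroup.eq_of_le_of_card_ge
  · rw [hcoe]
    exact hHle
  · rw [hn21, h21]

lemma aut_smul_eq_map (S : Subgroup G) (f : MulAut G) : f • S = S.map f.toMonoidHom := rfl

lemma conj21 (h168 : Nat.card G = 168) (a b : G) (ha : orderOf a = 7) (hb : orderOf b = 7)
    (hab : Subgroup.zpowers a ≠ Subgroup.zpowers b) (H K : Subgroup G)
    (h21H : Nat.card H = 21) (h21K : Nat.card K = 21) :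
    ∃ g : G, K = H.map (MulAut.conj g).toMonoidHom := by
  haveI : Fact (Nat.Prime 7) := ⟨by norm_num⟩
  obtain ⟨P1, hP1⟩ := subgroup21_eq_normalizer h168 a b ha hb hab H h21H
  obtain ⟨P2, hP2⟩ := subgroup21_eq_normalizer h168 a b ha hb hab K h21K
  obtain ⟨g, hg⟩ := MulAction.exists_smul_eq G P1 P2
  refine ⟨g, ?_⟩
  rw [hP1, hP2]
  rw [Subgroup.map_equiv_normalizer_eq (P1 : Subgroup G) (MulAut.conj g)]
  congr 1
  rw [← aut_smul_eq_map, ← Sylow.coe_subgroup_smul, hg]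

end Base168


abbrev G1 : Type := GL (Fin 3) (ZMod (2^1))

def Am : Matrix (Fin 3) (Fin 3) (ZMod (2^1)) := !![0,0,1; 1,0,1; 0,1,0]
def Tm : Matrix (Fin 3) (Fin 3) (ZMod (2^1)) := !![1,0,0; 0,0,1; 0,1,1]
def Sm : Matrix (Fin 3) (Fin 3) (ZMod (2^1)) := !![0,1,0; 1,0,0; 0,0,1]

def AU : G1 := ⟨Am, Am^6, by decide, by decide⟩
def TU : G1 := ⟨Tm, Tm^2, by decide, by decide⟩
def SU : G1 := ⟨Sm, Sm, by decide, by decide⟩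
def BU : G1 := SU * AU * SU⁻¹

instance finGL (m : ℕ) : Finite (GL (Fin 3) (ZMod (2^m))) := by
  haveI : NeZero (2^m) := ⟨pow_ne_zero _ two_ne_zero⟩
  exact inferInstance

lemma card_G1 : Nat.card G1 = 168 := by
  haveI : Fact (Nat.Prime (2^1)) := ⟨by norm_num⟩
  rw [Matrix.card_GL_field]
  simp [ZMod.card]
  decide

lemma AU_pow7 : AU ^ 7 = 1 := by
  apply Units.ext
  rw [Units.val_pow_eq_pow_val]
  decide

lemma AU_ne_one : AU ≠ 1 := by
  intro h
  have := congrArg Units.val h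
  exact absurd this (by decide)

lemma orderOf_AU : orderOf AU = 7 := by
  haveI : Fact (Nat.Prime 7) := ⟨by norm_num⟩
  exact orderOf_eq_prime AU_pow7 AU_ne_one

lemma BU_val : BU.val = Sm * Am * Sm := rfl

lemma BU_pow7 : BU ^ 7 = 1 := by
  apply Units.ext
  rw [Units.val_pow_eq_pow_val, BU_val]
  decide

lemma BU_ne_one : BU ≠ 1 := by
  intro h
  have := congrArg Units.val h
  rw [BU_val] at this
  exact absurd this (by decide)

lemma orderOf_BU : orderOf BU = 7 := by
  haveI : Fact (Nat.Prime 7) := ⟨by norm_num⟩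
  exact orderOf_eq_prime BU_pow7 BU_ne_one

lemma zpowers_ne : Subgroup.zpowers AU ≠ Subgroup.zpowers BU := by
  intro heq
  have hBU : BU ∈ Subgroup.zpowers AU := by
    rw [heq]
    exact Subgroup.mem_zpowers BU
  classical
  rw [mem_zpowers_iff_mem_range_orderOf, orderOf_AU] at hBU
  rw [Finset.mem_image] at hBU
  obtain ⟨i, hi, hAi⟩ := hBU
  rw [Finset.mem_range] at hi
  have hval : Am ^ i = Sm * Am * Sm := by
    have := congrArg Units.val hAi
    rw [Units.val_pow_eq_pow_val, BU_val] at this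
    exact this
  have hno : ∀ i, i < 7 → Am ^ i ≠ Sm * Am * Sm := by decide
  exact hno i hi hval

lemma TAT : TU * AU * TU⁻¹ = AU ^ 2 := by
  apply Units.ext
  rw [Units.val_pow_eq_pow_val]
  decide

lemma TAT' : TU⁻¹ * AU * TU = AU ^ 4 := by
  apply Units.ext
  rw [Units.val_pow_eq_pow_val]
  decide

lemma AT_ne_TA : AU * TU ≠ TU * AU := by
  intro h
  have := congrArg Units.val h
  exact absurd this (by decide)

/-- The normalizer of `⟨AU⟩`: our model nonabelian subgroup of order 21. -/
noncomputable def N1 : Subgroup G1 := Subgroup.normalizer ((Subgroup.zpowers AU : Subgroup G1) : Set G1)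

lemma AU_mem_N1 : AU ∈ N1 := Subgroup.le_normalizer (Subgroup.mem_zpowers AU)

lemma TU_mem_N1 : TU ∈ N1 := by
  rw [N1, Subgroup.mem_normalizer_iff]
  intro g
  constructor
  · intro hg
    obtain ⟨k, rfl⟩ := Subgroup.mem_zpowers_iff.mp hg
    have : TU * AU ^ k * TU⁻¹ = (AU ^ 2) ^ k := by
      rw [← TAT]
      exact conj_zpow.symm
    rw [this]
    exact Subgroup.zpow_mem _ (Subgroup.pow_mem _ (Subgroup.mem_zpowers AU) 2) k
  · intro hg
    obtain ⟨k, hk⟩ := Subgroup.mem_zpowers_iff.mp hg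
    have hgeq : g = TU⁻¹ * AU ^ k * TU := by
      rw [hk]
      group
    rw [hgeq]
    have : TU⁻¹ * AU ^ k * TU = (AU ^ 4) ^ k := by
      rw [← TAT']
      calc TU⁻¹ * AU ^ k * TU = TU⁻¹ * AU ^ k * TU⁻¹⁻¹ := by rw [inv_inv]
        _ = (TU⁻¹ * AU * TU⁻¹⁻¹) ^ k := conj_zpow.symm
        _ = (TU⁻¹ * AU * TU) ^ k := by rw [inv_inv]
    rw [this]
    exact Subgroup.zpow_mem _ (Subgroup.pow_mem _ (Subgroup.mem_zpowers AU) 4) k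

lemma card_N1 : Nat.card N1 = 21 := by
  haveI : Fact (Nat.Prime 7) := ⟨by norm_num⟩
  have hmult : Nat.card (Subgroup.zpowers AU) = 7 ^ (Nat.card G1).factorization 7 := by
    have h1 : Nat.card (Subgroup.zpowers AU) = 7 := by rw [Nat.card_zpowers, orderOf_AU]
    have h2 : (Nat.card G1).factorization 7 = 1 := fact168 card_G1
    rw [h1, h2, pow_one]
  have := norm21 card_G1 AU BU orderOf_AU orderOf_BU zpowers_ne (Sylow.ofCard _ hmult)
  exact this




lemma exists21 (n : ℕ) (hn : 1 ≤ n) :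
    ∃ H : Subgroup (GL (Fin 3) (ZMod (2 ^ n))),
      Nat.card H = 21 ∧ ¬ (∀ x y : H, x * y = y * x) := by
  obtain ⟨H, h21, hmap⟩ := exist_lift (redHom hn) (redHom_surjective le_rfl hn)
    (ker_isPGroup le_rfl hn) N1 card_N1
  refine ⟨H, h21, ?_⟩
  intro hcomm
  have hA : AU ∈ H.map (redHom hn) := by rw [hmap]; exact AU_mem_N1
  have hT : TU ∈ H.map (redHom hn) := by rw [hmap]; exact TU_mem_N1
  obtain ⟨x, hxH, hx⟩ := hA
  obtain ⟨y, hyH, hy⟩ := hT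
  have := hcomm ⟨x, hxH⟩ ⟨y, hyH⟩
  have hxy : x * y = y * x := by simpa [Subtype.ext_iff] using this
  apply AT_ne_TA
  rw [← hx, ← hy, ← _root_.map_mul, ← _root_.map_mul, hxy]

lemma conj21_all (n : ℕ) (hn : 1 ≤ n) :
    ∀ H K : Subgroup (GL (Fin 3) (ZMod (2 ^ n))),
      Nat.card H = 21 → ¬ (∀ x y : H, x * y = y * x) →
      Nat.card K = 21 → ¬ (∀ x y : K, x * y = y * x) →
      ∃ g : GL (Fin 3) (ZMod (2 ^ n)), K = H.map (MulAut.conj g).toMonoidHom := by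
  induction n, hn using Nat.le_induction with
  | base =>
    intro H K h1 _ h2 _
    exact conj21 card_G1 AU BU orderOf_AU orderOf_BU zpowers_ne H K h1 h2
  | succ m hm ih =>
    exact conj_lift (redHom (Nat.le_succ m)) (redHom_surjective hm (Nat.le_succ m))
      (ker_isPGroup hm (Nat.le_succ m)) (ker_comm (Nat.le_succ m) (by omega)) ih

end Stmt11

/-- For every `n ≥ 1`, `GL_3(ℤ/2^nℤ)` contains a nonabelian subgroup of
order `21`, and any two nonabelian subgroups of order `21` are conjugate. -/
theorem stmt11 (n : ℕ) (hn : 1 ≤ n) :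
    (∃ H : Subgroup (GL (Fin 3) (ZMod (2 ^ n))),
        Nat.card H = 21 ∧ ¬ (∀ x y : H, x * y = y * x)) ∧
    (∀ H K : Subgroup (GL (Fin 3) (ZMod (2 ^ n))),
        Nat.card H = 21 → ¬ (∀ x y : H, x * y = y * x) →
        Nat.card K = 21 → ¬ (∀ x y : K, x * y = y * x) →
        ∃ g : GL (Fin 3) (ZMod (2 ^ n)), K = H.map (MulAut.conj g).toMonoidHom) :=
  ⟨Stmt11.exists21 n hn, Stmt11.conj21_all n hn⟩
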